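/- Let T : A → B be a generalised *-homomorphism between Banach *-algebras, i.e. T is a generalised homomorphism and the map S(a) = T(a*)* − T(a) is continuous. Then T is a generalised triple homomorphism for the triple products {a,b,c} = (ab*c + cb*a)/2 on A and B: there exists K > 0 with ‖T({a,b,c}) − {T(a),T(b),T(c)}‖ ≤ K‖a‖‖b‖‖c‖ for all a,b,c. -/

import Mathlib

open Filter Topology
set_option maxHeartbeats 2000000

section helpers
variable (𝕜 : Type*) {V W : Type*} [RCLike 𝕜] [NormedAddCommGroup V] [NormedSpace 𝕜 V]
  [NormedAddCommGroup W] [NormedSpace 𝕜 W]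

private lemma my_nsmul_norm [RCLike 𝕜] (n : ℕ) (v : V) [NormedSpace 𝕜 V] :
    ‖(n • v : V)‖ = n * ‖v‖ := by
  rw [← Nat.cast_smul_eq_nsmul 𝕜, norm_smul, RCLike.norm_natCast]

variable [NormedSpace 𝕜 W]

private lemma bnd_of_additive [NormedSpace 𝕜 V] (f : V → W) (hadd : ∀ x y, f (x + y) = f x + f y)
    (K₀ : ℝ) (hK : ∀ x : V, ‖x‖ ≤ 1 → ‖f x‖ ≤ K₀) :
    ∀ x, ‖f x‖ ≤ 2 * K₀ * ‖x‖ := by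
  have h0 : f 0 = 0 := by
    have h := hadd 0 0
    rw [add_zero] at h
    exact (add_eq_right.mp h.symm)
  have hns : ∀ (n : ℕ) (x : V), f (n • x) = n • f x := by
    intro n
    induction n with
    | zero => intro x; simpa using h0
    | succ k ih => intro x; rw [succ_nsmul, succ_nsmul, hadd, ih]
  have hK0 : 0 ≤ K₀ := le_trans (norm_nonneg _) (hK 0 (by simp))
  have key : ∀ x : V, ‖x‖ ≤ 1 → ‖f x‖ ≤ 2 * K₀ * ‖x‖ := by
    intro x hx1
    rcases eq_or_ne x 0 with rfl | hx0
    · simp [h0]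
    have hx : 0 < ‖x‖ := norm_pos_iff.2 hx0
    set t : ℝ := 1 / ‖x‖ with ht
    have htpos : 0 < t := by positivity
    have ht1 : 1 ≤ t := by rw [ht]; rw [le_div_iff₀ hx]; linarith
    set n : ℕ := ⌊t⌋₊ with hn
    have hn1 : 1 ≤ n := Nat.le_floor (by exact_mod_cast ht1)
    have hfl : (n : ℝ) ≤ t := Nat.floor_le htpos.le
    have hhalf : t / 2 ≤ (n : ℝ) := by
      rcases le_or_gt 2 t with h2 | h2
      · have := Nat.sub_one_lt_floor t
        rw [← hn] at this
        linarith
      · have : (1:ℝ) ≤ (n:ℝ) := by exact_mod_cast hn1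
        linarith
    have htx : t * ‖x‖ = 1 := by rw [ht]; field_simp
    have hnx : ‖n • x‖ ≤ 1 := by
      rw [my_nsmul_norm 𝕜]
      calc (n:ℝ) * ‖x‖ ≤ t * ‖x‖ := by nlinarith
        _ = 1 := htx
    have hb := hK _ hnx
    rw [hns, my_nsmul_norm 𝕜] at hb
    have hnpos : (0:ℝ) < n := by exact_mod_cast hn1
    nlinarith [norm_nonneg (f x)]
  intro x
  rcases le_or_gt ‖x‖ 1 with hx1 | hx1
  · exact key x hx1
  · have hx : 0 < ‖x‖ := by linarith
    set m : ℕ := ⌈‖x‖⌉₊ with hm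
    have hm1 : 1 ≤ m := Nat.one_le_ceil_iff.mpr hx
    have hub : ‖x‖ ≤ (m:ℝ) := Nat.le_ceil _
    have hmpos : (0:ℝ) < m := by exact_mod_cast hm1
    set x' : V := ((m:𝕜))⁻¹ • x with hx'
    have hmne : ((m:𝕜)) ≠ 0 := by
      simp only [ne_eq, Nat.cast_eq_zero]
      omega
    have hsm : m • x' = x := by
      rw [hx', ← Nat.cast_smul_eq_nsmul 𝕜, smul_smul, mul_inv_cancel₀ hmne, one_smul]
    have hnx' : ‖x'‖ = ‖x‖ / m := by
      rw [hx', norm_smul, norm_inv, RCLike.norm_natCast]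
      ring
    have hle1 : ‖x'‖ ≤ 1 := by rw [hnx']; rw [div_le_one hmpos]; exact hub
    have hkey := key x' hle1
    have hfx : ‖f x‖ = m * ‖f x'‖ := by
      rw [← hsm, hns, my_nsmul_norm 𝕜]
    rw [hfx]
    rw [hnx'] at hkey
    calc (m:ℝ) * ‖f x'‖ ≤ m * (2 * K₀ * (‖x‖/m)) := by nlinarith
      _ = 2 * K₀ * ‖x‖ := by field_simp

private lemma bnd_of_additive_continuous [NormedSpace 𝕜 V] (f : V → W)
    (hadd : ∀ x y, f (x + y) = f x + f y)
    (hf : Continuous f) : ∃ M, 0 ≤ M ∧ ∀ x, ‖f x‖ ≤ M * ‖x‖ := by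
  have h0 : f 0 = 0 := by
    have h := hadd 0 0
    rw [add_zero] at h
    exact (add_eq_right.mp h.symm)
  have hns : ∀ (n : ℕ) (x : V), f (n • x) = n • f x := by
    intro n
    induction n with
    | zero => intro x; simpa using h0
    | succ k ih => intro x; rw [succ_nsmul, succ_nsmul, hadd, ih]
  have hca : ContinuousAt f 0 := hf.continuousAt
  obtain ⟨δ, hδ, hδ1⟩ := Metric.continuousAt_iff.1 hca 1 one_pos
  set N : ℕ := ⌊δ⁻¹⌋₊ + 1 with hN
  have hNpos : (0:ℝ) < N := by positivity
  have hNgt : δ⁻¹ < (N:ℝ) := by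
    rw [hN]; push_cast; exact Nat.lt_floor_add_one _
  have hNne : ((N:𝕜)) ≠ 0 := by
    simp only [ne_eq, Nat.cast_eq_zero]; omega
  have hunit : ∀ x : V, ‖x‖ ≤ 1 → ‖f x‖ ≤ N := by
    intro x hx
    set u : V := ((N:𝕜))⁻¹ • x with hu
    have hsu : N • u = x := by
      rw [hu, ← Nat.cast_smul_eq_nsmul 𝕜, smul_smul, mul_inv_cancel₀ hNne, one_smul]
    have hun : ‖u‖ = ‖x‖ / N := by
      rw [hu, norm_smul, norm_inv, RCLike.norm_natCast]; ring
    have hud : dist u 0 < δ := by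
      rw [dist_zero_right, hun]
      have h2 : ‖x‖ / N ≤ 1 / N := by gcongr
      have h1N : 1 / (N:ℝ) < δ := by
        rw [div_lt_iff₀ hNpos]
        rw [inv_lt_iff_one_lt_mul₀ hδ] at hNgt
        nlinarith
      linarith
    have hd := hδ1 hud
    rw [h0, dist_zero_right] at hd
    have hfx : ‖f x‖ = N * ‖f u‖ := by rw [← hsu, hns, my_nsmul_norm 𝕜]
    rw [hfx]
    nlinarith
  exact ⟨2 * N, by positivity, bnd_of_additive 𝕜 f hadd N hunit⟩
end helpers

section algid
variable {𝕜 A B : Type*} [RCLike 𝕜]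
    [NormedRing A] [NormedRing B] [NormedAlgebra 𝕜 A] [NormedAlgebra 𝕜 B]
    [StarRing A] [NormedStarGroup A] [StarRing B] [NormedStarGroup B]

private def Efn (T : A →ₗ[𝕜] B) (a b : A) : B := T (a * b) - T a * T b
private def Sfn (T : A →ₗ[𝕜] B) (a : A) : B := star (T (star a)) - T a

variable (T : A →ₗ[𝕜] B)

private lemma hstar_T : ∀ x : A, star (T (star x)) = Sfn T x + T x := fun x => by
  simp [Sfn]

private lemma Sfn_zero : Sfn T 0 = 0 := by simp [Sfn]

private lemma idTS (a d : A) :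
    T a * Sfn T d =
      Efn T a d + Sfn T (a * d) - Sfn T a * Sfn T d
        - star (Efn T (star d) (star a)) - Sfn T a * T d := by
  have h1 : star (Efn T (star d) (star a)) =
      (Sfn T (a * d) + T (a * d)) - (Sfn T a + T a) * (Sfn T d + T d) := by
    rw [Efn, star_sub, star_mul, ← star_mul, hstar_T, hstar_T, hstar_T]
  rw [h1, Efn]
  noncomm_ring

private lemma idST (a d : A) :
    Sfn T d * T a =
      Efn T d a + Sfn T (d * a) - Sfn T d * Sfn T a
        - star (Efn T (star a) (star d)) - T d * Sfn T a := by
  have h1 : star (Efn T (star a) (star d)) =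
      (Sfn T (d * a) + T (d * a)) - (Sfn T d + T d) * (Sfn T a + T a) := by
    rw [Efn, star_sub, star_mul, ← star_mul, hstar_T, hstar_T, hstar_T]
  rw [h1, Efn]
  noncomm_ring

private lemma idE (c d a : A) :
    Efn T c d * T a = Efn T c (d * a) - Efn T (c * d) a + T c * Efn T d a := by
  simp only [Efn, ← mul_assoc]
  noncomm_ring

private lemma sep_lemmas {C : ℝ} (hC : 0 ≤ C)
    (hE : ∀ a b : A, ‖Efn T a b‖ ≤ C * ‖a‖ * ‖b‖)
    (hS : Continuous (Sfn T)) (z : B)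
    (hz : ((0:A), z) ∈ T.graph.topologicalClosure) :
    (∀ d, z * Sfn T d = 0) ∧ (∀ d, Sfn T d * z = 0) ∧ (∀ c d, Efn T c d * z = 0) := by
  have hz' : ((0:A), z) ∈ closure (T.graph : Set (A × B)) := by
    rwa [← Submodule.topologicalClosure_coe]
  obtain ⟨u, hu_mem, hu_tend⟩ := mem_closure_iff_seq_limit.1 hz'
  set an : ℕ → A := fun n => (u n).1 with han
  have hu1 : Tendsto an atTop (𝓝 0) := by
    have := (continuous_fst.tendsto ((0:A), z)).comp hu_tend
    simpa [Function.comp_def] using this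
  have hu2 : Tendsto (fun n => T (an n)) atTop (𝓝 z) := by
    have h2 := (continuous_snd.tendsto ((0:A), z)).comp hu_tend
    have : (fun n => T (an n)) = fun n => (u n).2 := by
      funext n
      exact ((LinearMap.mem_graph_iff T (u n)).1 (hu_mem n)).symm
    rw [this]
    simpa [Function.comp_def] using h2
  have hnorm1 : Tendsto (fun n => ‖an n‖) atTop (𝓝 0) := by
    simpa using hu1.norm
  -- tendsto of Sfn (an n) to 0
  have hSan : Tendsto (fun n => Sfn T (an n)) atTop (𝓝 0) := by
    have := (hS.tendsto 0).comp hu1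
    simpa [Sfn_zero, Function.comp_def] using this
  -- generic squeeze for E with an on either side
  have hEan_r : ∀ d : A, Tendsto (fun n => Efn T (an n) d) atTop (𝓝 0) := by
    intro d
    apply squeeze_zero_norm (fun n => hE (an n) d)
    simpa using (hnorm1.const_mul C).mul_const ‖d‖
  have hEan_l : ∀ d : A, Tendsto (fun n => Efn T d (an n)) atTop (𝓝 0) := by
    intro d
    apply squeeze_zero_norm (fun n => hE d (an n))
    have : Tendsto (fun n => C * ‖d‖ * ‖an n‖) atTop (𝓝 (C * ‖d‖ * 0)) :=
      (hnorm1.const_mul (C * ‖d‖))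
    simpa [mul_assoc] using this
  refine ⟨?_, ?_, ?_⟩
  · intro d
    have l1 : Tendsto (fun n => T (an n) * Sfn T d) atTop (𝓝 (z * Sfn T d)) :=
      hu2.mul_const _
    have l2 : Tendsto (fun n => T (an n) * Sfn T d) atTop (𝓝 0) := by
      have heq : (fun n => T (an n) * Sfn T d) = fun n =>
          Efn T (an n) d + Sfn T (an n * d) - Sfn T (an n) * Sfn T d
            - star (Efn T (star d) (star (an n))) - Sfn T (an n) * T d := by
        funext n; exact idTS T (an n) d
      rw [heq]
      have p1 := hEan_r d
      have p2 : Tendsto (fun n => Sfn T (an n * d)) atTop (𝓝 0) := by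
        have hmul : Tendsto (fun n => an n * d) atTop (𝓝 0) := by
          simpa using hu1.mul_const d
        have := (hS.tendsto 0).comp hmul
        simpa [Sfn_zero, Function.comp_def] using this
      have p3 : Tendsto (fun n => Sfn T (an n) * Sfn T d) atTop (𝓝 0) := by
        simpa using hSan.mul_const (Sfn T d)
      have p4 : Tendsto (fun n => star (Efn T (star d) (star (an n)))) atTop (𝓝 0) := by
        apply squeeze_zero_norm (a := fun n => C * ‖d‖ * ‖an n‖)
        · intro n
          rw [norm_star]
          calc ‖Efn T (star d) (star (an n))‖ ≤ C * ‖star d‖ * ‖star (an n)‖ := hE _ _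
            _ = C * ‖d‖ * ‖an n‖ := by rw [norm_star, norm_star]
        · have : Tendsto (fun n => C * ‖d‖ * ‖an n‖) atTop (𝓝 (C * ‖d‖ * 0)) :=
            (hnorm1.const_mul (C * ‖d‖))
          simpa [mul_assoc] using this
      have p5 : Tendsto (fun n => Sfn T (an n) * T d) atTop (𝓝 0) := by
        simpa using hSan.mul_const (T d)
      have := ((((p1.add p2).sub p3).sub p4).sub p5)
      simpa using this
    exact tendsto_nhds_unique l1 l2
  · intro d
    have l1 : Tendsto (fun n => Sfn T d * T (an n)) atTop (𝓝 (Sfn T d * z)) :=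
      hu2.const_mul _
    have l2 : Tendsto (fun n => Sfn T d * T (an n)) atTop (𝓝 0) := by
      have heq : (fun n => Sfn T d * T (an n)) = fun n =>
          Efn T d (an n) + Sfn T (d * an n) - Sfn T d * Sfn T (an n)
            - star (Efn T (star (an n)) (star d)) - T d * Sfn T (an n) := by
        funext n; exact idST T (an n) d
      rw [heq]
      have p1 := hEan_l d
      have p2 : Tendsto (fun n => Sfn T (d * an n)) atTop (𝓝 0) := by
        have hmul : Tendsto (fun n => d * an n) atTop (𝓝 0) := by
          simpa using hu1.const_mul d
        have := (hS.tendsto 0).comp hmul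
        simpa [Sfn_zero, Function.comp_def] using this
      have p3 : Tendsto (fun n => Sfn T d * Sfn T (an n)) atTop (𝓝 0) := by
        simpa using hSan.const_mul (Sfn T d)
      have p4 : Tendsto (fun n => star (Efn T (star (an n)) (star d))) atTop (𝓝 0) := by
        apply squeeze_zero_norm (a := fun n => C * ‖an n‖ * ‖d‖)
        · intro n
          rw [norm_star]
          calc ‖Efn T (star (an n)) (star d)‖ ≤ C * ‖star (an n)‖ * ‖star d‖ := hE _ _
            _ = C * ‖an n‖ * ‖d‖ := by rw [norm_star, norm_star]
        · simpa using (hnorm1.const_mul C).mul_const ‖d‖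
      have p5 : Tendsto (fun n => T d * Sfn T (an n)) atTop (𝓝 0) := by
        simpa using hSan.const_mul (T d)
      have := ((((p1.add p2).sub p3).sub p4).sub p5)
      simpa using this
    exact tendsto_nhds_unique l1 l2
  · intro c d
    have l1 : Tendsto (fun n => Efn T c d * T (an n)) atTop (𝓝 (Efn T c d * z)) :=
      hu2.const_mul _
    have l2 : Tendsto (fun n => Efn T c d * T (an n)) atTop (𝓝 0) := by
      have heq : (fun n => Efn T c d * T (an n)) = fun n =>
          Efn T c (d * an n) - Efn T (c * d) (an n) + T c * Efn T d (an n) := by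
        funext n; exact idE T c d (an n)
      rw [heq]
      have q1 : Tendsto (fun n => Efn T c (d * an n)) atTop (𝓝 0) := by
        apply squeeze_zero_norm (a := fun n => C * ‖c‖ * (‖d‖ * ‖an n‖))
        · intro n
          calc ‖Efn T c (d * an n)‖ ≤ C * ‖c‖ * ‖d * an n‖ := hE _ _
            _ ≤ C * ‖c‖ * (‖d‖ * ‖an n‖) := by
                have := norm_mul_le d (an n)
                have hc : 0 ≤ C * ‖c‖ := mul_nonneg hC (norm_nonneg _)
                exact mul_le_mul_of_nonneg_left this hc
        · have : Tendsto (fun n => C * ‖c‖ * (‖d‖ * ‖an n‖)) atTop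
              (𝓝 (C * ‖c‖ * (‖d‖ * 0))) := ((hnorm1.const_mul ‖d‖).const_mul (C * ‖c‖))
          simpa using this
      have q2 := hEan_l (c * d)
      have q3 : Tendsto (fun n => T c * Efn T d (an n)) atTop (𝓝 0) := by
        simpa using (hEan_l d).const_mul (T c)
      have := ((q1.sub q2).add q3)
      simpa using this
    exact tendsto_nhds_unique l1 l2
end algid

section algid2
variable {𝕜 A B : Type*} [RCLike 𝕜]
    [NormedRing A] [NormedRing B] [NormedAlgebra 𝕜 A] [NormedAlgebra 𝕜 B]
    [StarRing A] [NormedStarGroup A] [StarRing B] [NormedStarGroup B]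

private def Dfn (T : A →ₗ[𝕜] B) (a b c : A) : B :=
  T (a * star b * c + c * star b * a) -
    (T a * star (T b) * T c + T c * star (T b) * T a)

variable (T : A →ₗ[𝕜] B)

private lemma star_T (b : A) : star (T b) = Sfn T (star b) + T (star b) := by
  have := hstar_T T (star b)
  rwa [star_star] at this

private lemma Sfn_add (x y : A) : Sfn T (x + y) = Sfn T x + Sfn T y := by
  simp only [Sfn, star_add, map_add]
  abel

private lemma idD (a b c : A) : Dfn T a b c =
    Efn T a (star b) * T c + Efn T (a * star b) c + Efn T (c * star b) a
      + Efn T c (star b) * T a - T a * (Sfn T (star b) * T c)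
      - T c * Sfn T (star b) * T a := by
  rw [Dfn, star_T, map_add]
  simp only [Efn]
  noncomm_ring

private lemma Dsymm (a b c : A) : Dfn T a b c = Dfn T c b a := by
  rw [Dfn, Dfn, add_comm (a * star b * c), add_comm (T a * star (T b) * T c)]

private lemma Dadd_b (a c b₁ b₂ : A) :
    Dfn T a (b₁ + b₂) c = Dfn T a b₁ c + Dfn T a b₂ c := by
  simp only [Dfn, star_add, map_add, mul_add, add_mul]
  noncomm_ring

private lemma Dsmul_a (s : 𝕜) (a b c : A) : Dfn T (s • a) b c = s • Dfn T a b c := by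
  simp only [Dfn, smul_mul_assoc, mul_smul_comm, ← smul_add, map_smul, smul_sub]

private lemma Dzero_a (b c : A) : Dfn T 0 b c = 0 := by
  have := Dsmul_a T (0:𝕜) 0 b c
  simpa using this

private lemma Dadd_c (a b c₁ c₂ : A) :
    Dfn T a b (c₁ + c₂) = Dfn T a b c₁ + Dfn T a b c₂ := by
  simp only [Dfn, star_add, map_add, mul_add, add_mul]
  noncomm_ring

private lemma Dsmul_c (s : 𝕜) (a b c : A) : Dfn T a b (s • c) = s • Dfn T a b c := by
  rw [Dsymm, Dsmul_a, Dsymm]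

end algid2

theorem stmt3 {𝕜 A B : Type*} [RCLike 𝕜]
    [NormedRing A] [NormedRing B] [NormedAlgebra 𝕜 A] [NormedAlgebra 𝕜 B]
    [CompleteSpace A] [CompleteSpace B]
    [StarRing A] [NormedStarGroup A] [StarRing B] [NormedStarGroup B]
    (T : A →ₗ[𝕜] B) (C : ℝ) (hC : 0 < C)
    (h : ∀ a b : A, ‖T (a * b) - T a * T b‖ ≤ C * ‖a‖ * ‖b‖)
    (hS : Continuous fun a : A => star (T (star a)) - T a) :
    ∃ K > 0, ∀ a b c : A,
      ‖T ((2 : 𝕜)⁻¹ • (a * star b * c + c * star b * a)) -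
          (2 : 𝕜)⁻¹ • (T a * star (T b) * T c + T c * star (T b) * T a)‖
        ≤ K * ‖a‖ * ‖b‖ * ‖c‖ := by
  have hE : ∀ a b : A, ‖Efn T a b‖ ≤ C * ‖a‖ * ‖b‖ := h
  have hS' : Continuous (Sfn T) := hS
  obtain ⟨Ms, hMs0, hMs⟩ := bnd_of_additive_continuous 𝕜 (Sfn T) (Sfn_add T) hS'
  -- closed graph machinery
  set G : Submodule 𝕜 (A × B) := T.graph.topologicalClosure with hGdef
  haveI : CompleteSpace G := (Submodule.isClosed_topologicalClosure _).completeSpace_coe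
  set p : G →L[𝕜] A := (ContinuousLinearMap.fst 𝕜 A B).comp G.subtypeL with hpdef
  have hsurj : Function.Surjective p := fun a =>
    ⟨⟨(a, T a), Submodule.le_topologicalClosure _ ((LinearMap.mem_graph_iff T (a, T a)).2 rfl)⟩,
      rfl⟩
  obtain ⟨K, hKpos, hKp⟩ := ContinuousLinearMap.exists_preimage_norm_le p hsurj
  -- the Σ-type bound
  set Φ : A → A → ℝ := fun b c =>
    C * ‖b‖ * ‖T c‖ + 2 * C * ‖b‖ * ‖c‖ +
      K * (‖Efn T c (star b)‖ + ‖Sfn T (star b) * T c‖ + ‖T c * Sfn T (star b)‖) with hΦdef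
  have hbound : ∀ a b c : A, ‖Dfn T a b c‖ ≤ Φ b c * ‖a‖ := by
    intro a b c
    obtain ⟨g, hg, hgn⟩ := hKp a
    set y : B := (g : A × B).2 with hydef
    have hy : ‖y‖ ≤ K * ‖a‖ := le_trans (norm_snd_le (g : A × B)) hgn
    set z : B := T a - y with hzdef
    have hzmem : ((0 : A), z) ∈ G := by
      have h1 : ((a, T a) : A × B) ∈ G :=
        Submodule.le_topologicalClosure _ ((LinearMap.mem_graph_iff T (a, T a)).2 rfl)
      have h2 : ((g : A × B)) ∈ G := g.2
      have h3 := Submodule.sub_mem G h1 h2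
      have h4 : ((a, T a) : A × B) - (g : A × B) = ((0 : A), z) := by
        have hg1 : (g : A × B).1 = a := hg
        ext
        · simp [hg1]
        · simp [hzdef, hydef]
      rwa [h4] at h3
    obtain ⟨s1, s2, s3⟩ := sep_lemmas T hC.le hE hS' z hzmem
    have hTa : T a = y + z := by rw [hzdef]; abel
    have keyD : Dfn T a b c =
        Efn T a (star b) * T c + Efn T (a * star b) c + Efn T (c * star b) a
          + Efn T c (star b) * y - y * (Sfn T (star b) * T c)
          - T c * Sfn T (star b) * y := by
      rw [idD, hTa]
      have e1 : Efn T c (star b) * z = 0 := s3 c (star b)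
      have e2 : z * (Sfn T (star b) * T c) = 0 := by
        rw [← mul_assoc, s1 (star b), zero_mul]
      have e3 : T c * Sfn T (star b) * z = 0 := by
        rw [mul_assoc, s2 (star b), mul_zero]
      rw [mul_add (Efn T c (star b)), add_mul y z, mul_add (T c * Sfn T (star b))]
      rw [e1, e2, e3]
      abel
    have hsb : ‖(star b : A)‖ = ‖b‖ := norm_star b
    have n1 : ‖Efn T a (star b) * T c‖ ≤ C * ‖a‖ * ‖b‖ * ‖T c‖ := by
      refine le_trans (norm_mul_le _ _) ?_
      have := hE a (star b); rw [hsb] at this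
      exact mul_le_mul_of_nonneg_right this (norm_nonneg _)
    have n2 : ‖Efn T (a * star b) c‖ ≤ C * (‖a‖ * ‖b‖) * ‖c‖ := by
      refine le_trans (hE _ c) ?_
      have h1 : ‖a * star b‖ ≤ ‖a‖ * ‖b‖ := by
        refine le_trans (norm_mul_le _ _) ?_
        rw [hsb]
      exact mul_le_mul_of_nonneg_right
        (mul_le_mul_of_nonneg_left h1 hC.le) (norm_nonneg _)
    have n3 : ‖Efn T (c * star b) a‖ ≤ C * (‖c‖ * ‖b‖) * ‖a‖ := by
      refine le_trans (hE _ a) ?_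
      have h1 : ‖c * star b‖ ≤ ‖c‖ * ‖b‖ := by
        refine le_trans (norm_mul_le _ _) ?_
        rw [hsb]
      exact mul_le_mul_of_nonneg_right
        (mul_le_mul_of_nonneg_left h1 hC.le) (norm_nonneg _)
    have n4 : ‖Efn T c (star b) * y‖ ≤ ‖Efn T c (star b)‖ * (K * ‖a‖) := by
      refine le_trans (norm_mul_le _ _) ?_
      exact mul_le_mul_of_nonneg_left hy (norm_nonneg _)
    have n5 : ‖y * (Sfn T (star b) * T c)‖ ≤ ‖Sfn T (star b) * T c‖ * (K * ‖a‖) := by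
      refine le_trans (norm_mul_le _ _) ?_
      rw [mul_comm ‖y‖]
      exact mul_le_mul_of_nonneg_left hy (norm_nonneg _)
    have n6 : ‖T c * Sfn T (star b) * y‖ ≤ ‖T c * Sfn T (star b)‖ * (K * ‖a‖) := by
      refine le_trans (norm_mul_le _ _) ?_
      exact mul_le_mul_of_nonneg_left hy (norm_nonneg _)
    have htot : ‖Dfn T a b c‖ ≤
        ‖Efn T a (star b) * T c‖ + ‖Efn T (a * star b) c‖ + ‖Efn T (c * star b) a‖
          + ‖Efn T c (star b) * y‖ + ‖y * (Sfn T (star b) * T c)‖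
          + ‖T c * Sfn T (star b) * y‖ := by
      rw [keyD]
      calc ‖Efn T a (star b) * T c + Efn T (a * star b) c + Efn T (c * star b) a
            + Efn T c (star b) * y - y * (Sfn T (star b) * T c)
            - T c * Sfn T (star b) * y‖
          ≤ ‖Efn T a (star b) * T c + Efn T (a * star b) c + Efn T (c * star b) a
            + Efn T c (star b) * y - y * (Sfn T (star b) * T c)‖
            + ‖T c * Sfn T (star b) * y‖ := norm_sub_le _ _
        _ ≤ ‖Efn T a (star b) * T c + Efn T (a * star b) c + Efn T (c * star b) a
            + Efn T c (star b) * y‖ + ‖y * (Sfn T (star b) * T c)‖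
            + ‖T c * Sfn T (star b) * y‖ := by
            have := norm_sub_le (Efn T a (star b) * T c + Efn T (a * star b) c
              + Efn T (c * star b) a + Efn T c (star b) * y) (y * (Sfn T (star b) * T c))
            linarith
        _ ≤ ‖Efn T a (star b) * T c‖ + ‖Efn T (a * star b) c‖ + ‖Efn T (c * star b) a‖
            + ‖Efn T c (star b) * y‖ + ‖y * (Sfn T (star b) * T c)‖
            + ‖T c * Sfn T (star b) * y‖ := by
            have g1 := norm_add_le (Efn T a (star b) * T c + Efn T (a * star b) c
              + Efn T (c * star b) a) (Efn T c (star b) * y)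
            have g2 := norm_add_le (Efn T a (star b) * T c + Efn T (a * star b) c)
              (Efn T (c * star b) a)
            have g3 := norm_add_le (Efn T a (star b) * T c) (Efn T (a * star b) c)
            linarith
    rw [hΦdef]
    simp only
    nlinarith [htot, n1, n2, n3, n4, n5, n6]
  have hΦnn : ∀ b c : A, 0 ≤ Φ b c := by
    intro b c
    rw [hΦdef]
    simp only
    have h1 : 0 ≤ C * ‖b‖ * ‖T c‖ :=
      mul_nonneg (mul_nonneg hC.le (norm_nonneg _)) (norm_nonneg _)
    have h2 : 0 ≤ 2 * C * ‖b‖ * ‖c‖ :=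
      mul_nonneg (mul_nonneg (mul_nonneg (by norm_num) hC.le) (norm_nonneg _)) (norm_nonneg _)
    have h3 : 0 ≤ K * (‖Efn T c (star b)‖ + ‖Sfn T (star b) * T c‖ + ‖T c * Sfn T (star b)‖) :=
      mul_nonneg hKpos.le (by positivity)
    linarith
  -- Banach–Steinhaus
  set fam : {q : A × A // ‖q.1‖ ≤ 1 ∧ ‖q.2‖ ≤ 1} → (A →L[𝕜] B) := fun q =>
    LinearMap.mkContinuous
      { toFun := fun c => Dfn T q.1.1 q.1.2 c
        map_add' := fun c₁ c₂ => Dadd_c T q.1.1 q.1.2 c₁ c₂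
        map_smul' := fun s c => Dsmul_c T s q.1.1 q.1.2 c }
      (Φ q.1.2 q.1.1)
      (fun c => by rw [LinearMap.coe_mk, AddHom.coe_mk]; rw [Dsymm]; exact hbound c q.1.2 q.1.1)
    with hfamdef
  have hfam_apply : ∀ q c, fam q c = Dfn T q.1.1 q.1.2 c := fun q c => rfl
  have hpt : ∀ c : A, ∃ Cc : ℝ, ∀ i, ‖fam i c‖ ≤ Cc := by
    intro c
    refine ⟨C * ‖T c‖ + 2 * C * ‖c‖ + K * (C * ‖c‖ + Ms * ‖T c‖ + ‖T c‖ * Ms), ?_⟩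
    rintro ⟨⟨a, b⟩, ha, hb⟩
    rw [hfam_apply]
    simp only
    have h1 := hbound a b c
    have hΦ : Φ b c ≤ C * ‖T c‖ + 2 * C * ‖c‖ + K * (C * ‖c‖ + Ms * ‖T c‖ + ‖T c‖ * Ms) := by
      rw [hΦdef]; simp only
      have hsb : ‖(star b : A)‖ = ‖b‖ := norm_star b
      have e1 : ‖Efn T c (star b)‖ ≤ C * ‖c‖ * ‖b‖ := by
        have := hE c (star b); rwa [hsb] at this
      have e2 : ‖Sfn T (star b) * T c‖ ≤ Ms * ‖b‖ * ‖T c‖ := by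
        refine le_trans (norm_mul_le _ _) ?_
        have := hMs (star b); rw [hsb] at this
        exact mul_le_mul_of_nonneg_right this (norm_nonneg _)
      have e3 : ‖T c * Sfn T (star b)‖ ≤ ‖T c‖ * (Ms * ‖b‖) := by
        refine le_trans (norm_mul_le _ _) ?_
        have := hMs (star b); rw [hsb] at this
        exact mul_le_mul_of_nonneg_left this (norm_nonneg _)
      have hb' : ‖b‖ ≤ 1 := hb
      have u1 : C * ‖b‖ * ‖T c‖ ≤ C * ‖T c‖ := by
        have : C * ‖b‖ * ‖T c‖ = (C * ‖T c‖) * ‖b‖ := by ring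
        rw [this]
        calc (C * ‖T c‖) * ‖b‖ ≤ (C * ‖T c‖) * 1 :=
              mul_le_mul_of_nonneg_left hb' (mul_nonneg hC.le (norm_nonneg _))
          _ = C * ‖T c‖ := mul_one _
      have u2 : 2 * C * ‖b‖ * ‖c‖ ≤ 2 * C * ‖c‖ := by
        have : 2 * C * ‖b‖ * ‖c‖ = (2 * C * ‖c‖) * ‖b‖ := by ring
        rw [this]
        calc (2 * C * ‖c‖) * ‖b‖ ≤ (2 * C * ‖c‖) * 1 :=
              mul_le_mul_of_nonneg_left hb'
                (mul_nonneg (mul_nonneg (by norm_num) hC.le) (norm_nonneg _))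
          _ = 2 * C * ‖c‖ := mul_one _
      have v1 : ‖Efn T c (star b)‖ ≤ C * ‖c‖ := by
        refine le_trans e1 ?_
        calc C * ‖c‖ * ‖b‖ ≤ C * ‖c‖ * 1 :=
              mul_le_mul_of_nonneg_left hb' (mul_nonneg hC.le (norm_nonneg _))
          _ = C * ‖c‖ := mul_one _
      have v2 : ‖Sfn T (star b) * T c‖ ≤ Ms * ‖T c‖ := by
        refine le_trans e2 ?_
        have : Ms * ‖b‖ * ‖T c‖ = (Ms * ‖T c‖) * ‖b‖ := by ring
        rw [this]
        calc (Ms * ‖T c‖) * ‖b‖ ≤ (Ms * ‖T c‖) * 1 :=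
              mul_le_mul_of_nonneg_left hb' (mul_nonneg hMs0 (norm_nonneg _))
          _ = Ms * ‖T c‖ := mul_one _
      have v3 : ‖T c * Sfn T (star b)‖ ≤ ‖T c‖ * Ms := by
        refine le_trans e3 ?_
        have : ‖T c‖ * (Ms * ‖b‖) = (‖T c‖ * Ms) * ‖b‖ := by ring
        rw [this]
        calc (‖T c‖ * Ms) * ‖b‖ ≤ (‖T c‖ * Ms) * 1 :=
              mul_le_mul_of_nonneg_left hb' (mul_nonneg (norm_nonneg _) hMs0)
          _ = ‖T c‖ * Ms := mul_one _
      have vK : K * (‖Efn T c (star b)‖ + ‖Sfn T (star b) * T c‖ + ‖T c * Sfn T (star b)‖)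
          ≤ K * (C * ‖c‖ + Ms * ‖T c‖ + ‖T c‖ * Ms) :=
        mul_le_mul_of_nonneg_left (by linarith) hKpos.le
      linarith
    calc ‖Dfn T a b c‖ ≤ Φ b c * ‖a‖ := h1
      _ ≤ Φ b c * 1 := mul_le_mul_of_nonneg_left (by exact ha) (hΦnn b c)
      _ = Φ b c := mul_one _
      _ ≤ _ := hΦ
  obtain ⟨K₁, hK₁⟩ := banach_steinhaus hpt
  have hK₁0 : 0 ≤ K₁ := le_trans (norm_nonneg _) (hK₁ ⟨(0, 0), by simp⟩)
  have hunit : ∀ a b c : A, ‖a‖ ≤ 1 → ‖b‖ ≤ 1 → ‖Dfn T a b c‖ ≤ K₁ * ‖c‖ := by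
    intro a b c ha hb
    have h1 := (fam ⟨(a, b), ha, hb⟩).le_opNorm c
    rw [hfam_apply] at h1
    simp only at h1
    exact le_trans h1 (mul_le_mul_of_nonneg_right (hK₁ _) (norm_nonneg _))
  have hA : ∀ a b c : A, ‖b‖ ≤ 1 → ‖Dfn T a b c‖ ≤ K₁ * ‖a‖ * ‖c‖ := by
    intro a b c hb
    rcases eq_or_ne a 0 with rfl | ha0
    · rw [Dzero_a]; simp
    · have hna : (0:ℝ) < ‖a‖ := norm_pos_iff.2 ha0
      set a' : A := ((‖a‖ : 𝕜))⁻¹ • a with ha'def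
      have hne : ((‖a‖ : 𝕜)) ≠ 0 := by
        simp only [ne_eq, RCLike.ofReal_eq_zero]
        exact hna.ne'
      have hsm : ((‖a‖ : 𝕜)) • a' = a := smul_inv_smul₀ hne a
      have hna' : ‖a'‖ ≤ 1 := by
        rw [ha'def, norm_smul, norm_inv, RCLike.norm_ofReal, abs_of_nonneg hna.le,
          inv_mul_cancel₀ hna.ne']
      have := hunit a' b c hna' hb
      calc ‖Dfn T a b c‖ = ‖Dfn T (((‖a‖ : 𝕜)) • a') b c‖ := by rw [hsm]
        _ = ‖a‖ * ‖Dfn T a' b c‖ := by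
            rw [Dsmul_a, norm_smul, RCLike.norm_ofReal, abs_of_nonneg hna.le]
        _ ≤ ‖a‖ * (K₁ * ‖c‖) := mul_le_mul_of_nonneg_left this hna.le
        _ = K₁ * ‖a‖ * ‖c‖ := by ring
  have hB : ∀ a c b : A, ‖Dfn T a b c‖ ≤ 2 * (K₁ * ‖a‖ * ‖c‖) * ‖b‖ := fun a c =>
    bnd_of_additive 𝕜 (fun b => Dfn T a b c) (fun b₁ b₂ => Dadd_b T a c b₁ b₂)
      (K₁ * ‖a‖ * ‖c‖) (fun b hb => hA a b c hb)
  refine ⟨2 * K₁ + 1, by linarith, ?_⟩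
  intro a b c
  have hgoal : T ((2 : 𝕜)⁻¹ • (a * star b * c + c * star b * a)) -
      (2 : 𝕜)⁻¹ • (T a * star (T b) * T c + T c * star (T b) * T a)
      = (2 : 𝕜)⁻¹ • Dfn T a b c := by
    rw [Dfn, map_smul, smul_sub]
  rw [hgoal, norm_smul]
  have h2n : ‖((2:𝕜))⁻¹‖ ≤ 1 := by
    rw [norm_inv]
    have : ‖(2:𝕜)‖ = 2 := by simp
    rw [this]
    norm_num
  have := hB a c b
  have hnn : 0 ≤ ‖Dfn T a b c‖ := norm_nonneg _
  have hprod : (0:ℝ) ≤ ‖a‖ * ‖b‖ * ‖c‖ := by positivity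
  calc ‖((2:𝕜))⁻¹‖ * ‖Dfn T a b c‖ ≤ 1 * ‖Dfn T a b c‖ :=
      mul_le_mul_of_nonneg_right h2n hnn
    _ = ‖Dfn T a b c‖ := one_mul _
    _ ≤ 2 * (K₁ * ‖a‖ * ‖c‖) * ‖b‖ := this
    _ ≤ (2 * K₁ + 1) * ‖a‖ * ‖b‖ * ‖c‖ := by nlinarith [norm_nonneg a, norm_nonneg b, norm_nonneg c, hK₁0]
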